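/- Let n ≥ 1, let p be an integer with 1 ≤ p ≤ n, let A be an n×n real matrix, and suppose x ∈ ℝⁿ and λ ∈ ℝ satisfy (A ⊗_p x)_i = λ + x_i for all i. Then there exist k with 1 ≤ k ≤ n and an injective map c : ℤ/kℤ → {1,…,n} such that (A ⊗_p x)_{c(m)} = A(c(m), c(m+1)) + x_{c(m+1)} for every m ∈ ℤ/kℤ, and Σ_{m ∈ ℤ/kℤ} A(c(m), c(m+1)) = k·λ. That is, the saturation graph Sat(A, p/n, x) contains a cycle whose mean weight equals λ. -/

import Mathlib

/-- The maxmin-`p` value of `s : Fin n → ℝ`: the `p`-th smallest element (1-indexed) of the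
multiset `{s 0, …, s (n-1)}`, counted with multiplicity. -/
noncomputable def maxmin {n : ℕ} (p : ℕ) (s : Fin n → ℝ) : ℝ :=
  (Multiset.sort (Multiset.map s (Finset.univ : Finset (Fin n)).val) (· ≤ ·)).getD (p - 1) 0

/-- The maxmin-`p` matrix-vector product: `(A ⊗_p x)_i = ⊕_p (j ↦ A i j + x j)`. -/
noncomputable def mmProd {n : ℕ} (p : ℕ) (A : Fin n → Fin n → ℝ) (x : Fin n → ℝ) :
    Fin n → ℝ :=
  fun i => maxmin p (fun j => A i j + x j)

lemma maxmin_mem {n p : ℕ} (hp1 : 1 ≤ p) (hpn : p ≤ n) (s : Fin n → ℝ) :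
    ∃ j, maxmin p s = s j := by
  unfold maxmin
  set l := Multiset.sort (Multiset.map s (Finset.univ : Finset (Fin n)).val) (· ≤ ·) with hl
  have hlen : l.length = n := by
    simp [hl]
  have hlt : p - 1 < l.length := by omega
  rw [List.getD_eq_getElem _ _ hlt]
  have hmem : l[p-1] ∈ l := List.getElem_mem _
  have hmem2 : l[p-1] ∈ Multiset.map s (Finset.univ : Finset (Fin n)).val := by
    rw [← Multiset.mem_sort (r := (· ≤ ·))]; exact hmem
  obtain ⟨j, _, hj⟩ := Multiset.mem_map.mp hmem2
  exact ⟨j, hj.symm⟩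

/-- If `x` is a maxmin-`p` eigenvector of `A` with eigenvalue `λ`, then the saturation graph
`Sat(A, p/n, x)` contains a cycle (given by an injective `c : Fin k → Fin n`, with successor
taken cyclically) whose mean weight equals `λ`. -/
theorem saturation_graph_has_cycle_with_mean (n p : ℕ) (hn : 1 ≤ n) (hp1 : 1 ≤ p)
    (hpn : p ≤ n) (A : Fin n → Fin n → ℝ) (x : Fin n → ℝ) (lam : ℝ)
    (hx : ∀ i, mmProd p A x i = lam + x i) :
    ∃ k : ℕ, ∃ hk : 1 ≤ k, k ≤ n ∧ ∃ c : Fin k → Fin n, Function.Injective c ∧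
      (∀ m : Fin k,
        mmProd p A x (c m) =
          A (c m) (c ⟨(m.val + 1) % k, Nat.mod_lt _ hk⟩) +
            x (c ⟨(m.val + 1) % k, Nat.mod_lt _ hk⟩)) ∧
      (∑ m : Fin k, A (c m) (c ⟨(m.val + 1) % k, Nat.mod_lt _ hk⟩)) = (k : ℝ) * lam := by
  -- a saturation successor function
  have hf : ∀ i, ∃ j, mmProd p A x i = A i j + x j := fun i =>
    maxmin_mem hp1 hpn (fun j => A i j + x j)
  choose f hfspec using hf
  -- find a periodic point of f
  have i0 : Fin n := ⟨0, hn⟩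
  have hni : ¬ Function.Injective (fun m : Fin (n+1) => f^[m.val] i0) := by
    intro hinj
    have := Fintype.card_le_of_injective _ hinj
    simp at this
  rw [Function.not_injective_iff] at hni
  obtain ⟨a, b, hab, hne⟩ := hni
  wlog hlt : b.val < a.val generalizing a b
  · have hne' : a.val ≠ b.val := fun h => hne (Fin.ext h)
    exact this b a hab.symm (Ne.symm hne) (by omega)
  set y := f^[b.val] i0 with hy
  have hper : Function.IsPeriodicPt f (a.val - b.val) y := by
    show f^[a.val - b.val] y = y
    rw [hy, ← Function.iterate_add_apply]
    have : a.val - b.val + b.val = a.val := by omega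
    rw [this, hab]
  have hkpos : 0 < Function.minimalPeriod f y :=
    hper.minimalPeriod_pos (by omega)
  set k := Function.minimalPeriod f y with hk
  have hperk : Function.IsPeriodicPt f k y := Function.isPeriodicPt_minimalPeriod f y
  haveI : NeZero k := ⟨hkpos.ne'⟩
  have hinj : Function.Injective (fun m : Fin k => f^[m.val] y) := by
    intro m1 m2 h
    exact Fin.ext (Function.iterate_injOn_Iio_minimalPeriod m1.isLt m2.isLt h)
  have hsucc : ∀ m : Fin k, f (f^[m.val] y) = f^[(m.val + 1) % k] y := by
    intro m
    rw [Function.iterate_mod_minimalPeriod_eq, ← Function.iterate_succ_apply' f m.val y]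
  refine ⟨k, hkpos, Fintype.card_fin n ▸ Fintype.card_fin k ▸
      Fintype.card_le_of_injective _ hinj, fun m => f^[m.val] y, hinj, fun m => ?_, ?_⟩
  · show mmProd p A x (f^[m.val] y) = A _ (f^[(m.val+1)%k] y) + x (f^[(m.val+1)%k] y)
    rw [← hsucc m]
    exact hfspec _
  · -- the sum
    set c : Fin k → Fin n := fun m => f^[m.val] y with hc
    have harc : ∀ m : Fin k, A (c m) (c (m + 1)) = lam + x (c m) - x (c (m + 1)) := by
      intro m
      have h1 : c (m + 1) = f (c m) := by
        rw [hsucc m]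
        simp [Fin.add_def, Nat.add_mod]
        rfl
      have := hfspec (c m)
      rw [hx (c m), ← h1] at this
      linarith
    have hmk : ∀ m : Fin k, (⟨(m.val + 1) % k, Nat.mod_lt _ hkpos⟩ : Fin k) = m + 1 := by
      intro m
      apply Fin.ext
      simp [Fin.add_def, Nat.add_mod]
    calc (∑ m : Fin k, A (c m) (c ⟨(m.val + 1) % k, Nat.mod_lt _ hkpos⟩))
        = ∑ m : Fin k, (lam + x (c m) - x (c (m + 1))) := by
          refine Finset.sum_congr rfl fun m _ => ?_
          rw [hmk m, harc m]
      _ = (k : ℝ) * lam + (∑ m : Fin k, x (c m)) - ∑ m : Fin k, x (c (m + 1)) := by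
          rw [Finset.sum_sub_distrib, Finset.sum_add_distrib]
          simp [mul_comm]
      _ = (k : ℝ) * lam := by
          have : ∑ m : Fin k, x (c (m + 1)) = ∑ m : Fin k, x (c m) :=
            Fintype.sum_equiv (Equiv.addRight 1) _ _ (fun m => rfl)
          rw [this]; ring
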